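/- Let d ≥ 1, let R be a symmetric positive definite real d×d matrix and let w̄ be a real d×d matrix such that R + w̄ is invertible and such that R·cosh(Rτ) + w̄·sinh(Rτ) is invertible for every τ ≥ 0. Then k(τ) := −(R·cosh(Rτ) + w̄·sinh(Rτ))⁻¹·(R·sinh(Rτ) + w̄·cosh(Rτ)) converges to −I_d as τ → ∞. -/

import Mathlib

open Matrix NormedSpace

attribute [local instance] Matrix.linftyOpNormedRing Matrix.linftyOpNormedAlgebra

/-- `cosh` of a square matrix. -/
noncomputable def mcosh {d : ℕ} (X : Matrix (Fin d) (Fin d) ℝ) : Matrix (Fin d) (Fin d) ℝ :=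
  (2:ℝ)⁻¹ • (exp X + exp (-X))

/-- `sinh` of a square matrix. -/
noncomputable def msinh {d : ℕ} (X : Matrix (Fin d) (Fin d) ℝ) : Matrix (Fin d) (Fin d) ℝ :=
  (2:ℝ)⁻¹ • (exp X - exp (-X))

lemma tendsto_exp_neg_smul {d : ℕ} (R : Matrix (Fin d) (Fin d) ℝ) (hRpos : R.PosDef) :
    Filter.Tendsto (fun τ : ℝ => exp (-(τ • R))) Filter.atTop (nhds 0) := by
  have key : ∃ V : Matrix (Fin d) (Fin d) ℝ, ∃ L : Fin d → ℝ, IsUnit V ∧ (∀ i, 0 < L i) ∧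
      R = V * Matrix.diagonal L * V⁻¹ := by
    refine ⟨↑(hRpos.isHermitian.eigenvectorUnitary), hRpos.isHermitian.eigenvalues, ?_, hRpos.eigenvalues_pos, ?_⟩
    · exact ⟨⟨_, _, Matrix.mem_unitaryGroup_iff.mp (hRpos.isHermitian.eigenvectorUnitary).2,
        Matrix.mem_unitaryGroup_iff'.mp (hRpos.isHermitian.eigenvectorUnitary).2⟩, rfl⟩
    · rw [Matrix.inv_eq_right_inv (Matrix.mem_unitaryGroup_iff.mp (hRpos.isHermitian.eigenvectorUnitary).2)]
      simpa [RCLike.ofReal_real_eq_id] using hRpos.isHermitian.spectral_theorem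
  obtain ⟨V, L, hV, hL, spec⟩ := key
  have hexp : ∀ τ : ℝ, exp (-(τ • R)) =
      V * Matrix.diagonal (fun i => Real.exp (-(τ * L i))) * V⁻¹ := by
    intro τ
    rw [spec]
    rw [show (τ • (V * Matrix.diagonal L * V⁻¹)) = V * (τ • Matrix.diagonal L) * V⁻¹ by
        simp [Matrix.mul_smul, Matrix.smul_mul]]
    rw [show -(V * (τ • Matrix.diagonal L) * V⁻¹) = V * (-(τ • Matrix.diagonal L)) * V⁻¹ by
        simp [mul_neg, neg_mul]]
    rw [Matrix.exp_conj V _ hV]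
    congr 2
    rw [show -(τ • Matrix.diagonal L) = Matrix.diagonal (fun i => -(τ * L i)) by
        ext a b; by_cases h : a = b <;> simp [Matrix.diagonal_apply, h]]
    rw [Matrix.exp_diagonal]
    congr 1
    funext i
    rw [Pi.exp_def, ← Real.exp_eq_exp_ℝ]
  simp only [hexp]
  have hdiag : Filter.Tendsto (fun τ : ℝ => Matrix.diagonal (fun i => Real.exp (-(τ * L i))))
      Filter.atTop (nhds 0) := by
    have heq : ∀ τ : ℝ, Matrix.diagonal (fun i => Real.exp (-(τ * L i))) =
        ∑ i, Real.exp (-(τ * L i)) • Matrix.diagonal (Pi.single i (1:ℝ)) := by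
      intro τ; ext a b; simp [Matrix.diagonal_apply, Matrix.sum_apply, Pi.single_apply]
    simp only [heq]
    have : (0 : Matrix (Fin d) (Fin d) ℝ) = ∑ i : Fin d, (0 : Matrix (Fin d) (Fin d) ℝ) := by simp
    rw [this]
    refine tendsto_finset_sum _ (fun i _ => ?_)
    have h1 : Filter.Tendsto (fun τ : ℝ => Real.exp (-(τ * L i))) Filter.atTop (nhds 0) := by
      apply Real.tendsto_exp_atBot.comp
      exact Filter.tendsto_neg_atBot_iff.mpr (Filter.tendsto_id.atTop_mul_const (hL i))
    simpa using h1.smul_const (Matrix.diagonal (Pi.single i (1:ℝ)))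
  have h2 := ((tendsto_const_nhds (x := V)).mul hdiag).mul (tendsto_const_nhds (x := V⁻¹))
  simpa using h2

theorem stmt_9 (d : ℕ) (hd : 1 ≤ d)
    (R wbar : Matrix (Fin d) (Fin d) ℝ)
    (hRsymm : R.IsSymm) (hRpos : R.PosDef)
    (hRw : IsUnit (R + wbar))
    (hinv : ∀ τ : ℝ, 0 ≤ τ → IsUnit (R * mcosh (τ • R) + wbar * msinh (τ • R)))
    (k : ℝ → Matrix (Fin d) (Fin d) ℝ)
    (hk : ∀ τ, k τ = -((R * mcosh (τ • R) + wbar * msinh (τ • R))⁻¹ *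
      (R * msinh (τ • R) + wbar * mcosh (τ • R)))) :
    Filter.Tendsto k Filter.atTop (nhds (-1)) := by
  classical
  haveI : CompleteSpace (Matrix (Fin d) (Fin d) ℝ) := FiniteDimensional.complete ℝ _
  set A := R + wbar with hAdef
  set B := R - wbar with hBdef
  have hdetA : IsUnit A.det := (Matrix.isUnit_iff_isUnit_det A).mp hRw
  set e : ℝ → Matrix (Fin d) (Fin d) ℝ := fun τ => exp (τ • R) with hedef
  set f : ℝ → Matrix (Fin d) (Fin d) ℝ := fun τ => exp (-(τ • R)) with hfdef
  have hef : ∀ τ, e τ * f τ = 1 := by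
    intro τ
    show exp (τ • R) * exp (-(τ • R)) = 1
    rw [← Matrix.exp_add_of_commute _ _ ((Commute.refl (τ • R)).neg_right)]
    simp
  have hfe : ∀ τ, f τ * e τ = 1 := by
    intro τ
    show exp (-(τ • R)) * exp (τ • R) = 1
    rw [← Matrix.exp_add_of_commute _ _ ((Commute.refl (τ • R)).neg_left)]
    simp
  have hUe : ∀ τ, IsUnit (e τ) := fun τ => ⟨⟨e τ, f τ, hef τ, hfe τ⟩, rfl⟩
  set E : ℝ → Matrix (Fin d) (Fin d) ℝ := fun τ => f τ * (A⁻¹ * B) * f τ with hEdef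
  have hmc : ∀ τ : ℝ, mcosh (τ • R) = (2:ℝ)⁻¹ • (e τ + f τ) := fun τ => rfl
  have hms : ∀ τ : ℝ, msinh (τ • R) = (2:ℝ)⁻¹ • (e τ - f τ) := fun τ => rfl
  have hM : ∀ τ : ℝ, R * mcosh (τ • R) + wbar * msinh (τ • R)
      = (2:ℝ)⁻¹ • (A * e τ + B * f τ) := by
    intro τ
    rw [hmc, hms, Matrix.mul_smul, Matrix.mul_smul, ← smul_add]
    congr 1
    rw [hAdef, hBdef]
    noncomm_ring
  have hN : ∀ τ : ℝ, R * msinh (τ • R) + wbar * mcosh (τ • R)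
      = (2:ℝ)⁻¹ • (A * e τ - B * f τ) := by
    intro τ
    rw [hmc, hms, Matrix.mul_smul, Matrix.mul_smul, ← smul_add]
    congr 1
    rw [hAdef, hBdef]
    noncomm_ring
  have hAeE : ∀ τ, (A * e τ) * E τ = B * f τ := by
    intro τ
    rw [hEdef]
    simp only [mul_assoc]
    rw [← mul_assoc (e τ) (f τ), hef τ, one_mul, ← mul_assoc A A⁻¹,
      Matrix.mul_nonsing_inv A hdetA, one_mul]
  have hfact1 : ∀ τ, A * e τ + B * f τ = (A * e τ) * (1 + E τ) := by
    intro τ; rw [mul_add, mul_one, hAeE τ]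
  have hfact2 : ∀ τ, A * e τ - B * f τ = (A * e τ) * (1 - E τ) := by
    intro τ; rw [mul_sub, mul_one, hAeE τ]
  have hdetQ : ∀ τ : ℝ, 0 ≤ τ → IsUnit (1 + E τ).det := by
    intro τ hτ
    have h := (Matrix.isUnit_iff_isUnit_det _).mp (hinv τ hτ)
    rw [hM τ, hfact1 τ, Matrix.det_smul, Matrix.det_mul] at h
    exact isUnit_of_mul_isUnit_right (isUnit_of_mul_isUnit_right h)
  have key : ∀ τ : ℝ, 0 ≤ τ → k τ = -((1 + E τ)⁻¹ * (1 - E τ)) := by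
    intro τ hτ
    rw [hk τ]
    congr 1
    have hdetM : IsUnit (R * mcosh (τ • R) + wbar * msinh (τ • R)).det :=
      (Matrix.isUnit_iff_isUnit_det _).mp (hinv τ hτ)
    have hMN : (R * mcosh (τ • R) + wbar * msinh (τ • R)) * ((1 + E τ)⁻¹ * (1 - E τ))
        = R * msinh (τ • R) + wbar * mcosh (τ • R) := by
      rw [hM τ, hfact1 τ, hN τ, hfact2 τ, Matrix.smul_mul]
      congr 1
      rw [mul_assoc, ← mul_assoc (1 + E τ), Matrix.mul_nonsing_inv _ (hdetQ τ hτ), one_mul]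
    rw [← hMN, ← mul_assoc, Matrix.nonsing_inv_mul _ hdetM, one_mul]
  have hf0 : Filter.Tendsto f Filter.atTop (nhds 0) := tendsto_exp_neg_smul R hRpos
  have hE0 : Filter.Tendsto E Filter.atTop (nhds 0) := by
    have := (hf0.mul_const (A⁻¹ * B)).mul hf0
    simpa using this
  have h1 : Filter.Tendsto (fun τ => 1 + E τ) Filter.atTop
      (nhds (1 : Matrix (Fin d) (Fin d) ℝ)) := by
    simpa using tendsto_const_nhds.add hE0
  have hinvT : Filter.Tendsto (fun τ => (1 + E τ)⁻¹) Filter.atTop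
      (nhds (1 : Matrix (Fin d) (Fin d) ℝ)) := by
    have hc : ContinuousAt Ring.inverse (1 : Matrix (Fin d) (Fin d) ℝ) :=
      NormedRing.inverse_continuousAt (1 : (Matrix (Fin d) (Fin d) ℝ)ˣ)
    have h2 := hc.tendsto.comp h1
    simp only [Function.comp_def, Matrix.nonsing_inv_eq_ringInverse]
    rw [Ring.inverse_one] at h2
    exact h2
  have h2 : Filter.Tendsto (fun τ => 1 - E τ) Filter.atTop
      (nhds (1 : Matrix (Fin d) (Fin d) ℝ)) := by
    simpa using tendsto_const_nhds.sub hE0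
  have hmain : Filter.Tendsto (fun τ => -((1 + E τ)⁻¹ * (1 - E τ))) Filter.atTop
      (nhds (-1 : Matrix (Fin d) (Fin d) ℝ)) := by
    simpa using (hinvT.mul h2).neg
  refine hmain.congr' ?_
  filter_upwards [Filter.eventually_ge_atTop (0:ℝ)] with τ hτ
  exact (key τ hτ).symm
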